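/- arXiv:2605.09986 — 5 statements merged into one kernel-verified Lean document; each statement's English description precedes it below -/
import Mathlib

section
/- For any vectors a, b in ℝ^V, the softmax function satisfies ‖softmax(a) − softmax(b)‖₁ ≤ (1/2)‖a − b‖₁, where softmax(z)_v = exp(z_v) / Σ_w exp(z_w). -/
noncomputable def softmax {V : ℕ} (z : Fin V → ℝ) : Fin V → ℝ :=
  fun v => Real.exp (z v) / ∑ w, Real.exp (z w)

lemma sig_hasDeriv (R t : ℝ) (hR : 0 < R) :
    HasDerivAt (fun t => Real.exp t / (Real.exp t + R))
      (Real.exp t * R / (Real.exp t + R) ^ 2) t := by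
  have h1 : HasDerivAt (fun t => Real.exp t + R) (Real.exp t) t :=
    (Real.hasDerivAt_exp t).add_const R
  have hne : Real.exp t + R ≠ 0 := by positivity
  have := (Real.hasDerivAt_exp t).div h1 hne
  refine this.congr_deriv ?_
  ring

lemma sig_lip (R : ℝ) (hR : 0 < R) (u v : ℝ) :
    |Real.exp v / (Real.exp v + R) - Real.exp u / (Real.exp u + R)| ≤ |v - u| / 4 := by
  set f : ℝ → ℝ := fun t => Real.exp t / (Real.exp t + R) with hf
  have hdiff : Differentiable ℝ f := fun t => (sig_hasDeriv R t hR).differentiableAt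
  have hderiv_le : ∀ t, deriv f t ≤ 1 / 4 := by
    intro t
    rw [(sig_hasDeriv R t hR).deriv]
    rw [div_le_div_iff₀ (by positivity) (by norm_num)]
    nlinarith [sq_nonneg (Real.exp t - R)]
  have hmono : Monotone f := by
    apply monotone_of_deriv_nonneg hdiff
    intro t
    rw [(sig_hasDeriv R t hR).deriv]
    positivity
  have key : ∀ x y : ℝ, x ≤ y → |f y - f x| ≤ |y - x| / 4 := by
    intro x y hxy
    rw [abs_of_nonneg (sub_nonneg.mpr (hmono hxy)), abs_of_nonneg (by linarith : (0:ℝ) ≤ y - x)]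
    have := image_sub_le_mul_sub_of_deriv_le hdiff hderiv_le hxy
    linarith
  rcases le_total u v with h | h
  · exact key u v h
  · rw [abs_sub_comm, abs_sub_comm v u]; exact key v u h

lemma softmax_update_le {V : ℕ} (z : Fin V → ℝ) (v₀ : Fin V) (c : ℝ) :
    ∑ v, |softmax (Function.update z v₀ c) v - softmax z v| ≤ (1/2) * |c - z v₀| := by
  classical
  set z' := Function.update z v₀ c with hz'def
  have hz'v₀ : z' v₀ = c := Function.update_self v₀ c z
  have hz'ne : ∀ v : Fin V, v ≠ v₀ → z' v = z v := fun v hv => Function.update_of_ne hv c z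
  set R := ∑ w ∈ Finset.univ.erase v₀, Real.exp (z w) with hRdef
  have hsum : ∑ w, Real.exp (z w) = Real.exp (z v₀) + R := by
    exact (Finset.add_sum_erase _ (fun w => Real.exp (z w)) (Finset.mem_univ v₀)).symm
  have hsum' : ∑ w, Real.exp (z' w) = Real.exp c + R := by
    rw [← Finset.add_sum_erase _ (fun w => Real.exp (z' w)) (Finset.mem_univ v₀), hz'v₀]
    congr 1
    exact Finset.sum_congr rfl fun w hw => by rw [hz'ne w (Finset.ne_of_mem_erase hw)]
  rcases (Finset.univ.erase v₀).eq_empty_or_nonempty with he | hne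
  · have hR0 : R = 0 := by rw [hRdef, he, Finset.sum_empty]
    have huniv : (Finset.univ : Finset (Fin V)) = {v₀} := by
      rw [← Finset.insert_erase (Finset.mem_univ v₀), he]; rfl
    rw [huniv, Finset.sum_singleton]
    have h1 : softmax z v₀ = 1 := by
      rw [softmax, hsum, hR0, add_zero, div_self (Real.exp_ne_zero _)]
    have h2 : softmax z' v₀ = 1 := by
      rw [softmax, hsum', hR0, add_zero, hz'v₀, div_self (Real.exp_ne_zero _)]
    rw [h1, h2, sub_self, abs_zero]
    positivity
  · have hRpos : 0 < R := Finset.sum_pos (fun w _ => Real.exp_pos _) hne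
    set S : ℝ := Real.exp (z v₀) + R with hS
    set S' : ℝ := Real.exp c + R with hS'
    have hSpos : 0 < S := by positivity
    have hS'pos : 0 < S' := by positivity
    have hp : softmax z v₀ = Real.exp (z v₀) / S := by rw [softmax, hsum]
    have hp' : softmax z' v₀ = Real.exp c / S' := by rw [softmax, hsum', hz'v₀]
    rw [← Finset.add_sum_erase _ _ (Finset.mem_univ v₀)]
    have hterm : ∀ v ∈ Finset.univ.erase v₀,
        |softmax z' v - softmax z v| = Real.exp (z v) * |1 / S' - 1 / S| := by
      intro v hv
      have hvne : v ≠ v₀ := Finset.ne_of_mem_erase hv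
      rw [softmax, softmax, hsum, hsum', hz'ne v hvne]
      rw [div_eq_mul_one_div (Real.exp (z v)) S', div_eq_mul_one_div (Real.exp (z v)) S,
        ← mul_sub, abs_mul, abs_of_pos (Real.exp_pos _)]
    rw [Finset.sum_congr rfl hterm, ← Finset.sum_mul, ← hRdef]
    have hkey : R * |1 / S' - 1 / S| = |softmax z' v₀ - softmax z v₀| := by
      rw [hp, hp', abs_sub_comm (1 / S'), ← abs_of_pos hRpos, ← abs_mul]
      congr 1
      field_simp
      ring
    rw [hkey]
    have hlip := sig_lip R hRpos (z v₀) c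
    rw [hp, hp']
    calc |Real.exp c / S' - Real.exp (z v₀) / S| + |Real.exp c / S' - Real.exp (z v₀) / S|
        = 2 * |Real.exp c / S' - Real.exp (z v₀) / S| := by ring
      _ ≤ 2 * (|c - z v₀| / 4) := by linarith [hlip]
      _ = (1/2) * |c - z v₀| := by ring

/-- Softmax is ½-Lipschitz from ℓ¹ to ℓ¹. -/
theorem softmax_lipschitz_l1 {V : ℕ} (hV : 0 < V) (a b : Fin V → ℝ) :
    ∑ v, |softmax a v - softmax b v| ≤ (1 / 2) * ∑ v, |a v - b v| := by
  classical
  set c : ℕ → Fin V → ℝ := fun k v => if (v : ℕ) < k then b v else a v with hc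
  have hc0 : c 0 = a := by
    funext v; simp [hc]
  have hcV : c V = b := by
    funext v; simp [hc, v.isLt]
  have hstep : ∀ k (hk : k < V), c (k + 1) = Function.update (c k) ⟨k, hk⟩ (b ⟨k, hk⟩) := by
    intro k hk
    funext v
    by_cases hv : v = ⟨k, hk⟩
    · subst hv
      simp [hc, Function.update_self]
    · rw [Function.update_of_ne hv]
      have hne : (v : ℕ) ≠ k := fun h => hv (Fin.ext h)
      have : (v : ℕ) < k + 1 ↔ (v : ℕ) < k := by omega
      simp [hc, this]
  have main : ∀ n, n ≤ V →
      ∑ v, |softmax a v - softmax (c n) v| ≤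
        (1 / 2) * ∑ v ∈ Finset.univ.filter (fun v : Fin V => (v : ℕ) < n), |a v - b v| := by
    intro n
    induction n with
    | zero =>
      intro _
      rw [hc0]
      simp
    | succ n ih =>
      intro hn1
      have hn : n < V := hn1
      have ihn := ih (le_of_lt hn)
      have htri : ∑ v, |softmax a v - softmax (c (n + 1)) v| ≤
          (∑ v, |softmax a v - softmax (c n) v|) +
          ∑ v, |softmax (c (n + 1)) v - softmax (c n) v| := by
        rw [← Finset.sum_add_distrib]
        apply Finset.sum_le_sum
        intro v _
        have := abs_sub_le (softmax a v) (softmax (c n) v) (softmax (c (n + 1)) v)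
        rw [abs_sub_comm (softmax (c n) v)] at this
        exact this
      have hone : ∑ v, |softmax (c (n + 1)) v - softmax (c n) v| ≤
          (1 / 2) * |a ⟨n, hn⟩ - b ⟨n, hn⟩| := by
        rw [hstep n hn]
        have hcn : c n ⟨n, hn⟩ = a ⟨n, hn⟩ := by simp [hc]
        have := softmax_update_le (c n) ⟨n, hn⟩ (b ⟨n, hn⟩)
        rw [hcn, abs_sub_comm] at this
        exact this
      have hfilter : Finset.univ.filter (fun v : Fin V => (v : ℕ) < n + 1) =
          insert ⟨n, hn⟩ (Finset.univ.filter (fun v : Fin V => (v : ℕ) < n)) := by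
        ext v
        simp only [Finset.mem_filter, Finset.mem_insert, Finset.mem_univ, true_and]
        constructor
        · intro h
          rcases Nat.lt_succ_iff_lt_or_eq.mp h with h | h
          · exact Or.inr h
          · exact Or.inl (Fin.ext h)
        · rintro (rfl | h)
          · exact Nat.lt_succ_self n
          · exact Nat.lt_succ_of_lt h
      have hnotmem : (⟨n, hn⟩ : Fin V) ∉ Finset.univ.filter (fun v : Fin V => (v : ℕ) < n) := by
        simp
      rw [hfilter, Finset.sum_insert hnotmem]
      linarith
  have := main V le_rfl
  rw [hcV] at this
  have hfull : Finset.univ.filter (fun v : Fin V => (v : ℕ) < V) = Finset.univ := by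
    apply Finset.filter_true_of_mem
    intro v _
    exact v.isLt
  rw [hfull] at this
  exact this
end

section
/- Let ℓ⋆, η ∈ ℝ^V and define g(η) = KL(softmax(ℓ⋆) ‖ softmax(ℓ⋆ + η)). Then g(η) ≤ (1/4)‖η‖₂². -/
/-- There is a center `c` (the midpoint of the range of `η`) such that every
`(η v - c)^2` is at most half of `∑ η²`. -/
lemma exists_center_sq_le {V : ℕ} (hV : 0 < V) (η : Fin V → ℝ) :
    ∃ c : ℝ, ∀ v, (η v - c) ^ 2 ≤ (1 / 2) * ∑ v, η v ^ 2 := by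
  have hne : Nonempty (Fin V) := ⟨⟨0, hV⟩⟩
  have huniv : (Finset.univ : Finset (Fin V)).Nonempty := Finset.univ_nonempty
  obtain ⟨vM, -, hM⟩ := Finset.exists_max_image (Finset.univ : Finset (Fin V)) η huniv
  obtain ⟨vm, -, hm⟩ := Finset.exists_min_image (Finset.univ : Finset (Fin V)) η huniv
  refine ⟨(η vM + η vm) / 2, fun v => ?_⟩
  have h1 : η vm ≤ η v := hm v (Finset.mem_univ v)
  have h2 : η v ≤ η vM := hM v (Finset.mem_univ v)
  by_cases hvv : vM = vm
  · have hEq : η vM = η vm := by rw [hvv]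
    have hnn : 0 ≤ ∑ v, η v ^ 2 := Finset.sum_nonneg fun _ _ => sq_nonneg _
    nlinarith
  · have hpair : η vM ^ 2 + η vm ^ 2 ≤ ∑ v, η v ^ 2 := by
      have hsub : ({vM, vm} : Finset (Fin V)) ⊆ Finset.univ := Finset.subset_univ _
      have := Finset.sum_le_sum_of_subset_of_nonneg hsub
        (fun i _ _ => sq_nonneg (η i))
      rwa [Finset.sum_pair hvv] at this
    have hstep : (η v - (η vM + η vm) / 2) ^ 2 ≤ ((η vM - η vm) / 2) ^ 2 := by
      nlinarith [mul_nonneg (sub_nonneg.2 h2) (sub_nonneg.2 h1)]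
    nlinarith [hstep, hpair, sq_nonneg (η vM + η vm)]

/-- `KL(softmax ℓ⋆ ‖ softmax (ℓ⋆ + η)) ≤ (1/4) ‖η‖₂²`. -/
theorem kl_softmax_le_quarter_sq {V : ℕ} (hV : 0 < V) (ℓ η : Fin V → ℝ) :
    ∑ v, softmax ℓ v * Real.log (softmax ℓ v / softmax (fun w => ℓ w + η w) v)
      ≤ (1 / 4) * ∑ v, (η v) ^ 2 := by
  have hne : Nonempty (Fin V) := ⟨⟨0, hV⟩⟩
  have huniv : (Finset.univ : Finset (Fin V)).Nonempty := Finset.univ_nonempty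
  obtain ⟨c, hc⟩ := exists_center_sq_le hV η
  set Z : ℝ := ∑ w, Real.exp (ℓ w) with hZdef
  set Z' : ℝ := ∑ w, Real.exp (ℓ w + η w) with hZ'def
  have hZpos : 0 < Z := Finset.sum_pos (fun w _ => Real.exp_pos _) huniv
  have hZ'pos : 0 < Z' := Finset.sum_pos (fun w _ => Real.exp_pos _) huniv
  set p : Fin V → ℝ := fun v => Real.exp (ℓ v) / Z with hpdef
  have hsm : softmax ℓ = p := rfl
  have hppos : ∀ v, 0 < p v := fun v => div_pos (Real.exp_pos _) hZpos
  have hpsum : ∑ v, p v = 1 := by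
    simp only [hpdef, ← Finset.sum_div]
    exact div_self hZpos.ne'
  set S : ℝ → ℝ := fun t => ∑ v, p v * Real.exp (t * η v) with hSdef
  set S₁ : ℝ → ℝ := fun t => ∑ v, p v * (Real.exp (t * η v) * η v) with hS₁def
  set S₂ : ℝ → ℝ := fun t => ∑ v, p v * (Real.exp (t * η v) * η v * η v) with hS₂def
  have hSpos : ∀ t, 0 < S t := fun t =>
    Finset.sum_pos (fun v _ => mul_pos (hppos v) (Real.exp_pos _)) huniv
  have hS : ∀ t, HasDerivAt S (S₁ t) t := fun t =>
    HasDerivAt.fun_sum fun v _ => ((hasDerivAt_mul_const (η v)).exp.const_mul (p v))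
  have hS₁ : ∀ t, HasDerivAt S₁ (S₂ t) t := fun t =>
    HasDerivAt.fun_sum fun v _ =>
      (((hasDerivAt_mul_const (η v)).exp.mul_const (η v)).const_mul (p v))
  set C : ℝ := (1 / 2) * ∑ v, η v ^ 2 with hCdef
  -- variance bound
  have hvar : ∀ t : ℝ, (S₂ t * S t - S₁ t * S₁ t) / S t ^ 2 ≤ C := by
    intro t
    rw [div_le_iff₀ (by positivity)]
    set Q : ℝ := ∑ v, p v * Real.exp (t * η v) * (η v - c) ^ 2 with hQdef
    have hQid : Q = S₂ t - 2 * c * S₁ t + c ^ 2 * S t := by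
      rw [hQdef, hS₂def, hS₁def, hSdef, Finset.mul_sum, Finset.mul_sum,
        ← Finset.sum_sub_distrib, ← Finset.sum_add_distrib]
      exact Finset.sum_congr rfl fun v _ => by ring
    have hQle : Q ≤ C * S t := by
      rw [hQdef, hSdef, Finset.mul_sum]
      refine Finset.sum_le_sum fun v _ => ?_
      have hw : 0 ≤ p v * Real.exp (t * η v) :=
        (mul_pos (hppos v) (Real.exp_pos _)).le
      have h1 : (η v - c) ^ 2 ≤ C := hc v
      calc p v * Real.exp (t * η v) * (η v - c) ^ 2
          ≤ p v * Real.exp (t * η v) * C := mul_le_mul_of_nonneg_left h1 hw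
        _ = C * (p v * Real.exp (t * η v)) := by ring
    have hSQ : S t * Q - (S₁ t - c * S t) ^ 2 = S₂ t * S t - S₁ t * S₁ t := by
      rw [hQid]; ring
    nlinarith [sq_nonneg (S₁ t - c * S t),
      mul_le_mul_of_nonneg_left hQle (hSpos t).le]
  -- derivative of S₁/S
  have hψ : ∀ t : ℝ, HasDerivAt (fun t => S₁ t / S t)
      ((S₂ t * S t - S₁ t * S₁ t) / S t ^ 2) t :=
    fun t => (hS₁ t).div (hS t) (hSpos t).ne'
  -- θ t = S₁ t / S t - t * C is antitone on [0,1]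
  have hθ : ∀ t : ℝ, HasDerivAt (fun t => S₁ t / S t - t * C)
      ((S₂ t * S t - S₁ t * S₁ t) / S t ^ 2 - C) t :=
    fun t => (hψ t).sub (hasDerivAt_mul_const C)
  have hθdiff : Differentiable ℝ (fun t => S₁ t / S t - t * C) :=
    fun t => (hθ t).differentiableAt
  have hθanti : AntitoneOn (fun t => S₁ t / S t - t * C) (Set.Icc 0 1) := by
    apply antitoneOn_of_deriv_nonpos (convex_Icc 0 1)
      hθdiff.continuous.continuousOn hθdiff.differentiableOn
    intro x _
    rw [(hθ x).deriv]
    have := hvar x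
    linarith
  set A : ℝ := ∑ v, p v * η v with hAdef
  have hS0 : S 0 = 1 := by
    rw [hSdef]
    simp only [zero_mul, Real.exp_zero, mul_one]
    exact hpsum
  have hS₁0 : S₁ 0 = A := by
    rw [hS₁def, hAdef]
    simp [Real.exp_zero]
  have hψle : ∀ t ∈ Set.Icc (0:ℝ) 1, S₁ t / S t ≤ A + t * C := by
    intro t ht
    have h0 : (0:ℝ) ∈ Set.Icc (0:ℝ) 1 := by norm_num
    have := hθanti h0 ht ht.1
    simp only [hS₁0, hS0, zero_mul, sub_zero, div_one] at this
    linarith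
  -- g t = log (S t) - t * A - t^2 * (C/2) is antitone on [0,1]
  have hg : ∀ t : ℝ, HasDerivAt (fun t => Real.log (S t) - t * A - t ^ 2 * (C / 2))
      (S₁ t / S t - A - t * C) t := by
    intro t
    have h1 : HasDerivAt (fun t => Real.log (S t)) (S₁ t / S t) t :=
      (hS t).log (hSpos t).ne'
    have h2 : HasDerivAt (fun t : ℝ => t * A) A t := hasDerivAt_mul_const A
    have h3 : HasDerivAt (fun t : ℝ => t ^ 2 * (C / 2)) (2 * t ^ 1 * (C / 2)) t :=
      (hasDerivAt_pow 2 t).mul_const _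
    have h := (h1.fun_sub h2).fun_sub h3
    exact h.congr_deriv (by ring)
  have hgdiff : Differentiable ℝ (fun t => Real.log (S t) - t * A - t ^ 2 * (C / 2)) :=
    fun t => (hg t).differentiableAt
  have hganti : AntitoneOn (fun t => Real.log (S t) - t * A - t ^ 2 * (C / 2))
      (Set.Icc 0 1) := by
    apply antitoneOn_of_deriv_nonpos (convex_Icc 0 1)
      hgdiff.continuous.continuousOn hgdiff.differentiableOn
    intro x hx
    rw [interior_Icc] at hx
    have hxI : x ∈ Set.Icc (0:ℝ) 1 := ⟨hx.1.le, hx.2.le⟩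
    rw [(hg x).deriv]
    have := hψle x hxI
    linarith
  have hg10 : Real.log (S 1) - 1 * A - 1 ^ 2 * (C / 2)
      ≤ Real.log (S 0) - 0 * A - 0 ^ 2 * (C / 2) := by
    have h0 : (0:ℝ) ∈ Set.Icc (0:ℝ) 1 := by norm_num
    have h1 : (1:ℝ) ∈ Set.Icc (0:ℝ) 1 := by norm_num
    exact hganti h0 h1 zero_le_one
  have hlogS1 : Real.log (S 1) ≤ A + C / 2 := by
    rw [hS0, Real.log_one] at hg10
    nlinarith [hg10]
  -- identify S 1 with Z'/Z
  have hS1 : S 1 = Z' / Z := by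
    have hv : ∀ v, p v * Real.exp ((1:ℝ) * η v) = Real.exp (ℓ v + η v) / Z := by
      intro v
      have hpv : p v = Real.exp (ℓ v) / Z := rfl
      rw [hpv, one_mul, div_mul_eq_mul_div, ← Real.exp_add]
    calc S 1 = ∑ v, p v * Real.exp ((1:ℝ) * η v) := rfl
      _ = ∑ v, Real.exp (ℓ v + η v) / Z := Finset.sum_congr rfl fun v _ => hv v
      _ = Z' / Z := by rw [← Finset.sum_div]
  -- rewrite the KL sum
  have hterm : ∀ v, softmax ℓ v * Real.log (softmax ℓ v / softmax (fun w => ℓ w + η w) v)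
      = p v * ((Real.log Z' - Real.log Z) - η v) := by
    intro v
    rw [hsm]
    congr 1
    have hq : softmax (fun w => ℓ w + η w) v = Real.exp (ℓ v + η v) / Z' := rfl
    have hpv : p v = Real.exp (ℓ v) / Z := rfl
    rw [hq, hpv]
    rw [Real.log_div (div_pos (Real.exp_pos _) hZpos).ne'
        (div_pos (Real.exp_pos _) hZ'pos).ne',
      Real.log_div (Real.exp_ne_zero _) hZpos.ne',
      Real.log_div (Real.exp_ne_zero _) hZ'pos.ne',
      Real.log_exp, Real.log_exp]
    ring
  have hKL : ∑ v, softmax ℓ v * Real.log (softmax ℓ v / softmax (fun w => ℓ w + η w) v)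
      = Real.log (S 1) - A := by
    calc ∑ v, softmax ℓ v * Real.log (softmax ℓ v / softmax (fun w => ℓ w + η w) v)
        = ∑ v, p v * ((Real.log Z' - Real.log Z) - η v) :=
          Finset.sum_congr rfl fun v _ => hterm v
      _ = ∑ v, (p v * (Real.log Z' - Real.log Z) - p v * η v) := by
          refine Finset.sum_congr rfl fun v _ => by ring
      _ = (∑ v, p v) * (Real.log Z' - Real.log Z) - A := by
          rw [Finset.sum_sub_distrib, ← Finset.sum_mul, hAdef]
      _ = Real.log Z' - Real.log Z - A := by rw [hpsum, one_mul]
      _ = Real.log (S 1) - A := by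
          rw [hS1, Real.log_div hZ'pos.ne' hZpos.ne']
  rw [hKL]
  have : C / 2 = (1 / 4) * ∑ v, η v ^ 2 := by rw [hCdef]; ring
  linarith [hlogS1]
end

section
/- Let Y be a categorical random variable with distribution p ∈ ℝ^V and let ξ̄ ∈ ℝ^V be a random vector with mean-zero, jointly independent coordinates, independent of Y. Then the expectation of the third central moment Σ_v p_v (ξ̄_v − pᵀξ̄)³ equals Σ_v p_v (1 − p_v)(1 − 2 p_v) κ₃(ξ̄_v), where κ₃(ξ̄_v) = E[ξ̄_v³] is the third cumulant of the v-th coordinate. -/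
open MeasureTheory ProbabilityTheory ENNReal

lemma mul3_integrable {Ω : Type*} [MeasurableSpace Ω] (μ : Measure Ω) [IsProbabilityMeasure μ]
    {f g h : Ω → ℝ} (hf : MemLp f 3 μ) (hg : MemLp g 3 μ) (hh : MemLp h 3 μ) :
    Integrable (fun ω => f ω * g ω * h ω) μ := by
  have e1 : (1 : ℝ≥0∞) / (3/2) = 1/3 + 1/3 := by
    rw [ENNReal.div_add_div_same, one_div, ENNReal.inv_div (by norm_num) (by norm_num)]
    norm_num
  have hfg : MemLp (f • g) (3/2) μ := hg.smul hf (hpqr := ⟨by simpa only [one_div] using e1.symm⟩)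
  have e2 : (1 : ℝ≥0∞) / 1 = 1/(3/2) + 1/3 := by
    rw [one_div, one_div, ENNReal.inv_div (by norm_num) (by norm_num),
      ENNReal.div_add_div_same, inv_one]
    norm_num
    rw [ENNReal.div_self (by norm_num) (by norm_num)]
  have := memLp_one_iff_integrable.mp (hh.smul hfg (hpqr := ⟨by simpa only [one_div] using e2.symm⟩))
  exact this.congr (by filter_upwards with ω; simp [smul_eq_mul])

lemma triple_integral {V : ℕ} {Ω : Type*} [MeasurableSpace Ω] (μ : Measure Ω)
    [IsProbabilityMeasure μ] (ξ : Fin V → Ω → ℝ) (hmeas : ∀ v, Measurable (ξ v))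
    (hindep : iIndepFun ξ μ)
    (hmean : ∀ v, (∫ ω, ξ v ω ∂μ) = 0) (a b c : Fin V) :
    (∫ ω, ξ a ω * ξ b ω * ξ c ω ∂μ)
      = if a = b ∧ a = c then ∫ ω, (ξ a ω) ^ 3 ∂μ else 0 := by
  have zero_case : ∀ i j k : Fin V, i ≠ k → j ≠ k →
      (∫ ω, ξ i ω * ξ j ω * ξ k ω ∂μ) = 0 := by
    intro i j k hik hjk
    have hI : IndepFun (ξ i * ξ j) (ξ k) μ :=
      hindep.indepFun_mul_left hmeas i j k hik hjk
    have h2 := hI.integral_mul_eq_mul_integral ((hmeas i).mul (hmeas j)).aestronglyMeasurable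
      (hmeas k).aestronglyMeasurable
    have h3 : (∫ ω, ξ i ω * ξ j ω * ξ k ω ∂μ) = integral μ (ξ i * ξ j * ξ k) := rfl
    have h4 : integral μ (ξ k) = 0 := hmean k
    rw [h3, h2, h4, mul_zero]
  by_cases hab : a = b
  · subst hab
    by_cases hac : a = c
    · subst hac
      simp only [and_self, if_true]
      congr 1; ext ω; ring
    · simp only [hac, and_false, if_false]
      exact zero_case a a c hac hac
  · simp only [hab, false_and, if_false]
    by_cases hbc : b = c
    · subst hbc
      have heq : (∫ ω, ξ a ω * ξ b ω * ξ b ω ∂μ) = ∫ ω, ξ b ω * ξ b ω * ξ a ω ∂μ := by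
        congr 1; ext ω; ring
      rw [heq]; exact zero_case b b a (Ne.symm hab) (Ne.symm hab)
    · by_cases hac : a = c
      · subst hac
        have heq : (∫ ω, ξ a ω * ξ b ω * ξ a ω ∂μ) = ∫ ω, ξ a ω * ξ a ω * ξ b ω ∂μ := by
          congr 1; ext ω; ring
        rw [heq]; exact zero_case a a b hab hab
      · exact zero_case a b c hac hbc

lemma cube_sum_integral {V : ℕ} {Ω : Type*} [MeasurableSpace Ω] (μ : Measure Ω)
    [IsProbabilityMeasure μ] (ξ : Fin V → Ω → ℝ) (hmeas : ∀ v, Measurable (ξ v))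
    (hindep : iIndepFun ξ μ)
    (hmom : ∀ v, MemLp (ξ v) 3 μ)
    (hmean : ∀ v, (∫ ω, ξ v ω ∂μ) = 0) (q : Fin V → ℝ) :
    (∫ ω, (∑ w, q w * ξ w ω) ^ 3 ∂μ) = ∑ a, (q a) ^ 3 * ∫ ω, (ξ a ω) ^ 3 ∂μ := by
  have hint : ∀ a b c : Fin V,
      Integrable (fun ω => q a * q b * q c * (ξ a ω * ξ b ω * ξ c ω)) μ :=
    fun a b c => (mul3_integrable μ (hmom a) (hmom b) (hmom c)).const_mul _
  have hpt : ∀ ω, (∑ w, q w * ξ w ω) ^ 3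
      = ∑ a, ∑ b, ∑ c, q a * q b * q c * (ξ a ω * ξ b ω * ξ c ω) := by
    intro ω
    calc (∑ w, q w * ξ w ω) ^ 3
        = (∑ a, q a * ξ a ω) * ((∑ b, q b * ξ b ω) * (∑ c, q c * ξ c ω)) := by ring
      _ = ∑ a, ∑ b, ∑ c, q a * q b * q c * (ξ a ω * ξ b ω * ξ c ω) := by
          simp only [Finset.sum_mul, Finset.mul_sum]
          exact Finset.sum_congr rfl fun a _ => Finset.sum_congr rfl fun b _ =>
            Finset.sum_congr rfl fun c _ => by ring
  calc (∫ ω, (∑ w, q w * ξ w ω) ^ 3 ∂μ)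
      = ∫ ω, ∑ a, ∑ b, ∑ c, q a * q b * q c * (ξ a ω * ξ b ω * ξ c ω) ∂μ := by
        congr 1; ext ω; exact hpt ω
    _ = ∑ a, ∑ b, ∑ c, ∫ ω, q a * q b * q c * (ξ a ω * ξ b ω * ξ c ω) ∂μ := by
        rw [integral_finset_sum _ (fun a _ => integrable_finset_sum _
          (fun b _ => integrable_finset_sum _ (fun c _ => hint a b c)))]
        refine Finset.sum_congr rfl fun a _ => ?_
        rw [integral_finset_sum _ (fun b _ => integrable_finset_sum _
          (fun c _ => hint a b c))]
        exact Finset.sum_congr rfl fun b _ =>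
          integral_finset_sum _ (fun c _ => hint a b c)
    _ = ∑ a, ∑ b, ∑ c, q a * q b * q c * ∫ ω, ξ a ω * ξ b ω * ξ c ω ∂μ := by
        simp only [MeasureTheory.integral_const_mul]
    _ = ∑ a, (q a) ^ 3 * ∫ ω, (ξ a ω) ^ 3 ∂μ := by
        simp only [triple_integral μ ξ hmeas hindep hmean, mul_ite, mul_zero, ite_and]
        refine Finset.sum_congr rfl fun a _ => ?_
        have h1 : ∀ x : Fin V, (∑ x_1 : Fin V, if a = x then
            (if a = x_1 then q a * q x * q x_1 * ∫ ω, (ξ a ω) ^ 3 ∂μ else 0) else 0)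
            = if a = x then q a * q x * q a * ∫ ω, (ξ a ω) ^ 3 ∂μ else 0 := by
          intro x; by_cases h : a = x <;> simp [h, Finset.sum_ite_eq]
        simp only [h1, Finset.sum_ite_eq, Finset.mem_univ, if_true]
        ring

lemma cube_sum_integrable {V : ℕ} {Ω : Type*} [MeasurableSpace Ω] (μ : Measure Ω)
    [IsProbabilityMeasure μ] (ξ : Fin V → Ω → ℝ)
    (hmom : ∀ v, MemLp (ξ v) 3 μ) (q : Fin V → ℝ) :
    Integrable (fun ω => (∑ w, q w * ξ w ω) ^ 3) μ := by
  have hint : ∀ a b c : Fin V,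
      Integrable (fun ω => q a * q b * q c * (ξ a ω * ξ b ω * ξ c ω)) μ :=
    fun a b c => (mul3_integrable μ (hmom a) (hmom b) (hmom c)).const_mul _
  have hpt : ∀ ω, (∑ w, q w * ξ w ω) ^ 3
      = ∑ a, ∑ b, ∑ c, q a * q b * q c * (ξ a ω * ξ b ω * ξ c ω) := by
    intro ω
    calc (∑ w, q w * ξ w ω) ^ 3
        = (∑ a, q a * ξ a ω) * ((∑ b, q b * ξ b ω) * (∑ c, q c * ξ c ω)) := by ring
      _ = ∑ a, ∑ b, ∑ c, q a * q b * q c * (ξ a ω * ξ b ω * ξ c ω) := by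
          simp only [Finset.sum_mul, Finset.mul_sum]
          exact Finset.sum_congr rfl fun a _ => Finset.sum_congr rfl fun b _ =>
            Finset.sum_congr rfl fun c _ => by ring
  have : Integrable (fun ω => ∑ a, ∑ b, ∑ c : Fin V,
      q a * q b * q c * (ξ a ω * ξ b ω * ξ c ω)) μ :=
    integrable_finset_sum _ (fun a _ => integrable_finset_sum _
      (fun b _ => integrable_finset_sum _ (fun c _ => hint a b c)))
  exact this.congr (by filter_upwards with ω; exact (hpt ω).symm)


/-- Closed form for the expected third central moment of `ξ̄` under a fixed
categorical distribution `p`: with jointly independent, mean-zero coordinates,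
`E[∑_v p_v (ξ̄_v − pᵀξ̄)³] = ∑_v p_v (1 − p_v)(1 − 2 p_v) E[ξ̄_v³]`. -/
theorem third_central_moment_closed_form {V : ℕ} {Ω : Type*}
    [MeasurableSpace Ω] (μ : Measure Ω) [IsProbabilityMeasure μ]
    (p : Fin V → ℝ) (hp0 : ∀ v, 0 ≤ p v) (hp1 : ∑ v, p v = 1)
    (ξ : Fin V → Ω → ℝ) (hmeas : ∀ v, Measurable (ξ v))
    (hindep : iIndepFun ξ μ)
    (hmom : ∀ v, MemLp (ξ v) 3 μ)
    (hmean : ∀ v, (∫ ω, ξ v ω ∂μ) = 0) :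
    (∫ ω, ∑ v, p v * (ξ v ω - ∑ w, p w * ξ w ω) ^ 3 ∂μ)
      = ∑ v, p v * (1 - p v) * (1 - 2 * p v) * ∫ ω, (ξ v ω) ^ 3 ∂μ := by
  set κ : Fin V → ℝ := fun v => ∫ ω, (ξ v ω) ^ 3 ∂μ with hκ
  set q : Fin V → Fin V → ℝ := fun v w => (if w = v then 1 else 0) - p w with hqdef
  have hq : ∀ v ω, ξ v ω - ∑ w, p w * ξ w ω = ∑ w, q v w * ξ w ω := by
    intro v ω
    simp only [hqdef, sub_mul, ite_mul, one_mul, zero_mul, Finset.sum_sub_distrib,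
      Finset.sum_ite_eq', Finset.mem_univ, if_true]
  have hcube : ∀ v, Integrable (fun ω => p v * (ξ v ω - ∑ w, p w * ξ w ω) ^ 3) μ := by
    intro v
    have := (cube_sum_integrable μ ξ hmom (q v)).const_mul (p v)
    exact this.congr (by filter_upwards with ω; rw [hq v ω])
  have step1 : (∫ ω, ∑ v, p v * (ξ v ω - ∑ w, p w * ξ w ω) ^ 3 ∂μ)
      = ∑ v, p v * ∑ a, (q v a) ^ 3 * κ a := by
    rw [integral_finset_sum _ (fun v _ => hcube v)]
    refine Finset.sum_congr rfl fun v _ => ?_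
    have h1 : (∫ ω, p v * (ξ v ω - ∑ w, p w * ξ w ω) ^ 3 ∂μ)
        = ∫ ω, p v * (∑ w, q v w * ξ w ω) ^ 3 ∂μ := by
      congr 1; ext ω; rw [hq v ω]
    rw [h1, MeasureTheory.integral_const_mul,
      cube_sum_integral μ ξ hmeas hindep hmom hmean (q v)]
  rw [step1]
  have T : ℝ := 0
  have hsplit : ∀ v, (∑ a, (q v a) ^ 3 * κ a)
      = ((1 - p v) ^ 3 + (p v) ^ 3) * κ v - ∑ a, (p a) ^ 3 * κ a := by
    intro v
    have hterm : ∀ a : Fin V, (q v a) ^ 3 * κ a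
        = (if a = v then ((1 - p a) ^ 3 + (p a) ^ 3) * κ a else 0) - (p a) ^ 3 * κ a := by
      intro a
      by_cases h : a = v
      · simp only [hqdef, h, if_true]; ring
      · simp only [hqdef, h, if_false]; ring
    rw [Finset.sum_congr rfl (fun a _ => hterm a), Finset.sum_sub_distrib,
      Finset.sum_ite_eq', if_pos (Finset.mem_univ v)]
  calc ∑ v, p v * ∑ a, (q v a) ^ 3 * κ a
      = ∑ v, (p v * (((1 - p v) ^ 3 + (p v) ^ 3) * κ v)
          - p v * ∑ a, (p a) ^ 3 * κ a) := by
        refine Finset.sum_congr rfl fun v _ => ?_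
        rw [hsplit v]; ring
    _ = (∑ v, p v * (((1 - p v) ^ 3 + (p v) ^ 3) * κ v))
          - (∑ v, p v) * ∑ a, (p a) ^ 3 * κ a := by
        rw [Finset.sum_sub_distrib, Finset.sum_mul]
    _ = ∑ v, (p v * (((1 - p v) ^ 3 + (p v) ^ 3) * κ v) - (p v) ^ 3 * κ v) := by
        rw [hp1, one_mul, Finset.sum_sub_distrib]
    _ = ∑ v, p v * (1 - p v) * (1 - 2 * p v) * κ v := by
        refine Finset.sum_congr rfl fun v _ => ?_
        ring
end

section
/- Let P and Q be probability measures on a finite set with Q(y) > 0 whenever P(y) > 0, and write f(y) = log(P(y)/Q(y)) on the support of P. Then E_P[|f|] = KL(P ‖ Q) + 2 Σ_{y : Q(y) > P(y)} P(y) log(Q(y)/P(y)), and moreover Σ_{y: Q(y) > P(y)} P(y) log(Q(y)/P(y)) ≤ d_TV(P, Q), so that E_P[|log(P/Q)|] ≤ KL(P ‖ Q) + 2 d_TV(P, Q). -/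
open scoped Classical

/-- Splitting `E_P[|log(P/Q)|]` into KL plus twice the negative part, the
bound of the negative part by total variation, and the combined bound. -/
theorem abs_log_ratio_expectation {α : Type*} [Fintype α]
    (P Q : α → ℝ)
    (hP0 : ∀ y, 0 ≤ P y) (hP1 : ∑ y, P y = 1)
    (hQ0 : ∀ y, 0 ≤ Q y) (hQ1 : ∑ y, Q y = 1)
    (hsupp : ∀ y, 0 < P y → 0 < Q y) :
    (∑ y, P y * |Real.log (P y / Q y)|
      = (∑ y, P y * Real.log (P y / Q y))
        + 2 * ∑ y ∈ Finset.univ.filter (fun y => P y < Q y),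
            P y * Real.log (Q y / P y)) ∧
    (∑ y ∈ Finset.univ.filter (fun y => P y < Q y),
        P y * Real.log (Q y / P y)
      ≤ ∑ y ∈ Finset.univ.filter (fun y => P y < Q y), (Q y - P y)) ∧
    (∑ y, P y * |Real.log (P y / Q y)|
      ≤ (∑ y, P y * Real.log (P y / Q y))
        + 2 * ((1 / 2) * ∑ y, |P y - Q y|)) := by
  classical
  have h1 : ∑ y, P y * |Real.log (P y / Q y)|
      = (∑ y, P y * Real.log (P y / Q y))
        + 2 * ∑ y ∈ Finset.univ.filter (fun y => P y < Q y),
            P y * Real.log (Q y / P y) := by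
    have key : ∀ y, P y * |Real.log (P y / Q y)|
        = P y * Real.log (P y / Q y)
          + (if P y < Q y then 2 * (P y * Real.log (Q y / P y)) else 0) := by
      intro y
      rcases eq_or_lt_of_le (hP0 y) with h0 | h0
      · simp [← h0]
      · have hQ := hsupp y h0
        by_cases hlt : P y < Q y
        · have hr : P y / Q y < 1 := (div_lt_one hQ).2 hlt
          have hrpos : 0 < P y / Q y := div_pos h0 hQ
          have hneg : Real.log (P y / Q y) < 0 := Real.log_neg hrpos hr
          have hinv : Real.log (Q y / P y) = - Real.log (P y / Q y) := by
            rw [← Real.log_inv]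
            congr 1
            field_simp
          rw [abs_of_neg hneg, if_pos hlt, hinv]; ring
        · have hge : 1 ≤ P y / Q y := (one_le_div hQ).2 (le_of_not_gt hlt)
          have hnn : 0 ≤ Real.log (P y / Q y) := Real.log_nonneg hge
          rw [abs_of_nonneg hnn, if_neg hlt]; ring
    calc ∑ y, P y * |Real.log (P y / Q y)|
        = ∑ y, (P y * Real.log (P y / Q y)
            + (if P y < Q y then 2 * (P y * Real.log (Q y / P y)) else 0)) :=
          Finset.sum_congr rfl (fun y _ => key y)
      _ = (∑ y, P y * Real.log (P y / Q y))
          + ∑ y ∈ Finset.univ.filter (fun y => P y < Q y),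
              2 * (P y * Real.log (Q y / P y)) := by
          rw [Finset.sum_add_distrib, Finset.sum_filter]
      _ = _ := by rw [Finset.mul_sum]
  have h2 : ∑ y ∈ Finset.univ.filter (fun y => P y < Q y),
        P y * Real.log (Q y / P y)
      ≤ ∑ y ∈ Finset.univ.filter (fun y => P y < Q y), (Q y - P y) := by
    apply Finset.sum_le_sum
    intro y hy
    have hlt : P y < Q y := (Finset.mem_filter.mp hy).2
    rcases eq_or_lt_of_le (hP0 y) with h0 | h0
    · rw [← h0]; simpa using (hQ0 y)
    · have hQ : 0 < Q y := lt_trans h0 hlt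
      have hlog : Real.log (Q y / P y) ≤ Q y / P y - 1 :=
        Real.log_le_sub_one_of_pos (div_pos hQ h0)
      calc P y * Real.log (Q y / P y) ≤ P y * (Q y / P y - 1) := by
            exact mul_le_mul_of_nonneg_left hlog (hP0 y)
        _ = Q y - P y := by field_simp
  refine ⟨h1, h2, ?_⟩
  have hsum0 : ∑ y, (Q y - P y) = 0 := by
    rw [Finset.sum_sub_distrib, hQ1, hP1]; ring
  have hsplit := Finset.sum_filter_add_sum_filter_not Finset.univ
    (fun y => P y < Q y) (fun y => Q y - P y)
  have habs : ∑ y, |P y - Q y|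
      = ∑ y ∈ Finset.univ.filter (fun y => P y < Q y), (Q y - P y)
        - ∑ y ∈ Finset.univ.filter (fun y => ¬ P y < Q y), (Q y - P y) := by
    rw [Finset.sum_filter, Finset.sum_filter, ← Finset.sum_sub_distrib]
    apply Finset.sum_congr rfl
    intro y _
    by_cases hlt : P y < Q y
    · rw [if_pos hlt, if_neg (not_not_intro hlt), abs_of_neg (by linarith)]; ring
    · rw [if_neg hlt, if_pos hlt, abs_of_nonneg (by push_neg at hlt; linarith)]; ring
  have hhalf : ∑ y ∈ Finset.univ.filter (fun y => P y < Q y), (Q y - P y)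
      = (1 / 2) * ∑ y, |P y - Q y| := by
    rw [habs]; linarith [hsplit, hsum0]
  rw [h1]
  nlinarith [h2, hhalf]
end

section
/- Let P and Q be probability measures on a finite set with Q positive on the support of P. Then E_P[|log(P/Q)|] ≤ KL(P ‖ Q) + √(2 · KL(P ‖ Q)). -/
open Real Set

/-- `F x = (x+1) log x - 2(x-1)` is monotone on `(0,∞)`. -/
lemma F_monotone : MonotoneOn (fun x : ℝ => (x+1) * Real.log x - 2*(x-1)) (Set.Ioi 0) := by
  apply monotoneOn_of_deriv_nonneg (convex_Ioi 0)
  · fun_prop (disch := intro x hx; exact ne_of_gt hx)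
  · rw [interior_Ioi]
    intro x hx
    exact (((hasDerivAt_id x).add_const 1).mul (Real.hasDerivAt_log (ne_of_gt hx))).sub
      (((hasDerivAt_id x).sub_const 1).const_mul 2) |>.differentiableAt.differentiableWithinAt
  · rw [interior_Ioi]
    intro x hx
    have hx : (0:ℝ) < x := hx
    have hd : HasDerivAt (fun x : ℝ => (x+1) * Real.log x - 2*(x-1))
        (1 * Real.log x + (x+1) * x⁻¹ - 2 * 1) x :=
      (((hasDerivAt_id x).add_const 1).mul (Real.hasDerivAt_log (ne_of_gt hx))).sub
        (((hasDerivAt_id x).sub_const 1).const_mul 2)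
    rw [hd.deriv]
    have hlog : Real.log x⁻¹ ≤ x⁻¹ - 1 := Real.log_le_sub_one_of_pos (by positivity)
    rw [Real.log_inv] at hlog
    have : (x+1) * x⁻¹ = 1 + x⁻¹ := by field_simp
    nlinarith

lemma F_sign {x : ℝ} (hx : 0 < x) (h1 : 1 ≤ x) :
    0 ≤ (x+1) * Real.log x - 2*(x-1) := by
  have := F_monotone (Set.mem_Ioi.2 one_pos) (Set.mem_Ioi.2 hx) h1
  simpa using this

lemma F_sign' {x : ℝ} (hx : 0 < x) (h1 : x ≤ 1) :
    (x+1) * Real.log x - 2*(x-1) ≤ 0 := by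
  have := F_monotone (Set.mem_Ioi.2 hx) (Set.mem_Ioi.2 one_pos) h1
  simpa using this

lemma G_hasDeriv {x : ℝ} (hx : 0 < x) :
    HasDerivAt (fun x : ℝ => (2*x+4) * (x * Real.log x - x + 1) - 3*(x-1)^2)
      (4 * ((x+1) * Real.log x - 2*(x-1))) x := by
  have h1 : HasDerivAt (fun x : ℝ => x * Real.log x - x + 1) (Real.log x + 1 - 1) x :=
    ((Real.hasDerivAt_mul_log (ne_of_gt hx)).sub (hasDerivAt_id x)).add_const 1
  have h2 : HasDerivAt (fun x : ℝ => 2*x+4) 2 x := by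
    simpa using ((hasDerivAt_id x).const_mul 2).add_const 4
  have h3 : HasDerivAt (fun x : ℝ => 3*(x-1)^2) (3*(2*(x-1))) x := by
    exact (((hasDerivAt_id x).sub_const 1).pow 2).const_mul 3 |>.congr_deriv (by simp)
  have := (h2.mul h1).sub h3
  exact this.congr_deriv (by ring)

lemma G_nonneg {x : ℝ} (hx : 0 < x) :
    0 ≤ (2*x+4) * (x * Real.log x - x + 1) - 3*(x-1)^2 := by
  set G : ℝ → ℝ := fun x => (2*x+4) * (x * Real.log x - x + 1) - 3*(x-1)^2 with hG
  have hG1 : G 1 = 0 := by simp [hG]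
  rcases le_total 1 x with h1 | h1
  · have hmono : MonotoneOn G (Set.Ici 1) := by
      apply monotoneOn_of_deriv_nonneg (convex_Ici 1)
      · intro y hy
        exact (G_hasDeriv (lt_of_lt_of_le one_pos hy)).continuousAt.continuousWithinAt
      · rw [interior_Ici]
        intro y hy
        exact (G_hasDeriv (lt_trans one_pos hy)).differentiableAt.differentiableWithinAt
      · rw [interior_Ici]
        intro y hy
        rw [(G_hasDeriv (lt_trans one_pos hy)).deriv]
        have := F_sign (lt_trans one_pos hy) (le_of_lt hy)
        linarith
    have := hmono (Set.mem_Ici.2 le_rfl) (Set.mem_Ici.2 h1) h1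
    rw [hG1] at this; exact this
  · have hanti : AntitoneOn G (Set.Ioc 0 1) := by
      apply antitoneOn_of_deriv_nonpos (convex_Ioc 0 1)
      · intro y hy
        exact (G_hasDeriv hy.1).continuousAt.continuousWithinAt
      · rw [interior_Ioc]
        intro y hy
        exact (G_hasDeriv hy.1).differentiableAt.differentiableWithinAt
      · rw [interior_Ioc]
        intro y hy
        rw [(G_hasDeriv hy.1).deriv]
        have := F_sign' hy.1 (le_of_lt hy.2)
        linarith
    have := hanti (Set.mem_Ioc.2 ⟨hx, h1⟩) (Set.mem_Ioc.2 ⟨one_pos, le_rfl⟩) h1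
    rw [hG1] at this; exact this

lemma key_pointwise (p q : ℝ) (hp : 0 ≤ p) (hq : 0 ≤ q) (hs : 0 < p → 0 < q) :
    3*(p-q)^2 ≤ (2*p+4*q) * (p * Real.log (p/q) - p + q) := by
  rcases eq_or_lt_of_le hq with hq0 | hq0
  · have hp0 : p = 0 := by
      by_contra h
      exact absurd (hs (lt_of_le_of_ne hp (Ne.symm h))) (by rw [← hq0]; exact lt_irrefl 0)
    simp [hp0, ← hq0]
  rcases eq_or_lt_of_le hp with hp0 | hp0
  · rw [← hp0]
    simp only [zero_div, Real.log_zero]  -- careful: (0:ℝ)/q = 0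
    nlinarith
  · have hx : 0 < p/q := div_pos hp0 hq0
    have hG := G_nonneg hx
    have h2 : 0 ≤ ((2*(p/q)+4) * ((p/q) * Real.log (p/q) - (p/q) + 1) - 3*((p/q)-1)^2) * q^2 :=
      mul_nonneg hG (sq_nonneg q)
    have h3 : ((2*(p/q)+4) * ((p/q) * Real.log (p/q) - (p/q) + 1) - 3*((p/q)-1)^2) * q^2
        = (2*p+4*q) * (p * Real.log (p/q) - p + q) - 3*(p-q)^2 := by
      field_simp
    linarith [h3 ▸ h2]

lemma pinsker_l1 {α : Type*} [Fintype α]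
    (P Q : α → ℝ)
    (hP0 : ∀ y, 0 ≤ P y) (hP1 : ∑ y, P y = 1)
    (hQ0 : ∀ y, 0 ≤ Q y) (hQ1 : ∑ y, Q y = 1)
    (hsupp : ∀ y, 0 < P y → 0 < Q y) :
    ∑ y, |P y - Q y| ≤ Real.sqrt (2 * ∑ y, P y * Real.log (P y / Q y)) := by
  set r : α → ℝ := fun y => P y * Real.log (P y / Q y) - P y + Q y with hr
  set u : α → ℝ := fun y => (2 * P y + 4 * Q y) / 3 with hu
  have hkey : ∀ y, 3*(P y - Q y)^2 ≤ (2*P y + 4*Q y) * r y := fun y =>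
    key_pointwise (P y) (Q y) (hP0 y) (hQ0 y) (hsupp y)
  have hu0 : ∀ y, 0 ≤ u y := fun y => by
    have := hP0 y; have := hQ0 y; simp only [hu]; positivity
  have hr0 : ∀ y, 0 ≤ r y := by
    intro y
    rcases eq_or_lt_of_le (hQ0 y) with hq | hq
    · have hp : P y = 0 := by
        by_contra h
        exact absurd (hsupp y (lt_of_le_of_ne (hP0 y) (Ne.symm h)))
          (by rw [← hq]; exact lt_irrefl 0)
      simp [hr, hp, ← hq]
    · nlinarith [hkey y, sq_nonneg (P y - Q y), hP0 y]
  have hpt : ∀ y, |P y - Q y| ≤ Real.sqrt (u y) * Real.sqrt (r y) := by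
    intro y
    rw [← Real.sqrt_mul (hu0 y)]
    rw [← Real.sqrt_sq_eq_abs]
    apply Real.sqrt_le_sqrt
    have := hkey y
    simp only [hu]
    rw [div_mul_eq_mul_div, le_div_iff₀ (by norm_num : (0:ℝ) < 3)]
    linarith
  have hcs := Real.sum_sqrt_mul_sqrt_le (Finset.univ : Finset α) hu0 hr0
  have hsumu : ∑ y, u y = 2 := by
    simp only [hu, div_eq_mul_inv]
    rw [← Finset.sum_mul, Finset.sum_add_distrib, ← Finset.mul_sum, ← Finset.mul_sum,
      hP1, hQ1]
    norm_num
  have hsumr : ∑ y, r y = ∑ y, P y * Real.log (P y / Q y) := by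
    simp only [hr]
    rw [Finset.sum_add_distrib, Finset.sum_sub_distrib, hP1, hQ1]
    ring
  calc ∑ y, |P y - Q y| ≤ ∑ y, Real.sqrt (u y) * Real.sqrt (r y) :=
        Finset.sum_le_sum fun y _ => hpt y
    _ ≤ Real.sqrt (∑ y, u y) * Real.sqrt (∑ y, r y) := hcs
    _ = Real.sqrt (2 * ∑ y, P y * Real.log (P y / Q y)) := by
        rw [hsumu, hsumr, ← Real.sqrt_mul (by norm_num)]

/-- `E_P[|log(P/Q)|] ≤ KL(P‖Q) + √(2 KL(P‖Q))` on a finite set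
(via the TV split and Pinsker's inequality). -/
theorem abs_log_ratio_le_kl_add_sqrt {α : Type*} [Fintype α]
    (P Q : α → ℝ)
    (hP0 : ∀ y, 0 ≤ P y) (hP1 : ∑ y, P y = 1)
    (hQ0 : ∀ y, 0 ≤ Q y) (hQ1 : ∑ y, Q y = 1)
    (hsupp : ∀ y, 0 < P y → 0 < Q y) :
    ∑ y, P y * |Real.log (P y / Q y)|
      ≤ (∑ y, P y * Real.log (P y / Q y))
        + Real.sqrt (2 * ∑ y, P y * Real.log (P y / Q y)) := by
  have hpt : ∀ y, P y * |Real.log (P y / Q y)|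
      ≤ P y * Real.log (P y / Q y) + (|P y - Q y| + (Q y - P y)) := by
    intro y
    rcases eq_or_lt_of_le (hP0 y) with hp | hp
    · rw [← hp]
      have h := hQ0 y
      simp only [zero_mul, zero_add, zero_sub, abs_neg, sub_zero]
      rw [abs_of_nonneg h]
      linarith
    · have hq := hsupp y hp
      rcases le_or_gt 0 (Real.log (P y / Q y)) with hl | hl
      · rw [abs_of_nonneg hl]
        have : 0 ≤ |P y - Q y| + (Q y - P y) := by
          rcases abs_cases (P y - Q y) with ⟨h, _⟩ | ⟨h, _⟩ <;> linarith
        linarith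
      · rw [abs_of_neg hl]
        have hlog : Real.log (Q y / P y) ≤ Q y / P y - 1 :=
          Real.log_le_sub_one_of_pos (div_pos hq hp)
        have hinv : Real.log (Q y / P y) = -Real.log (P y / Q y) := by
          rw [← Real.log_inv, inv_div]
        have hmul : P y * Real.log (Q y / P y) ≤ Q y - P y := by
          have := mul_le_mul_of_nonneg_left hlog (le_of_lt hp)
          have heq : P y * (Q y / P y - 1) = Q y - P y := by
            field_simp
          linarith
        have hpos : 0 < Q y - P y := by
          have : 0 < P y * Real.log (Q y / P y) := mul_pos hp (by rw [hinv]; linarith)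
          linarith
        rw [abs_of_neg (by linarith : P y - Q y < 0)]
        rw [hinv] at hmul
        linarith
  have hsum : ∑ y, (|P y - Q y| + (Q y - P y)) = ∑ y, |P y - Q y| := by
    rw [Finset.sum_add_distrib, Finset.sum_sub_distrib, hP1, hQ1]
    ring
  calc ∑ y, P y * |Real.log (P y / Q y)|
      ≤ ∑ y, (P y * Real.log (P y / Q y) + (|P y - Q y| + (Q y - P y))) :=
        Finset.sum_le_sum fun y _ => hpt y
    _ = (∑ y, P y * Real.log (P y / Q y)) + ∑ y, |P y - Q y| := by
        rw [Finset.sum_add_distrib, hsum]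
    _ ≤ (∑ y, P y * Real.log (P y / Q y))
        + Real.sqrt (2 * ∑ y, P y * Real.log (P y / Q y)) := by
        have := pinsker_l1 P Q hP0 hP1 hQ0 hQ1 hsupp
        linarith
end
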